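/- For a finitely additive probability measure p on the Boolean algebra generated by ±1-valued propositions A1, A2, B1, B2 (i.e., a joint distribution over their 16 value assignments), the correlators ⟨AiBj⟩ defined via p satisfy all eight CHSH inequalities |±⟨A1B1⟩ ± ⟨A1B2⟩ ± ⟨A2B1⟩ ± ⟨A2B2⟩| ≤ 2 where the number of minus signs is odd. -/

import Mathlib

set_option maxHeartbeats 1600000 in
/-- a joint distribution on {-1,1}^4 satisfies all eight CHSH inequalities
(with an odd number of minus signs). -/
theorem all_eight_chsh_from_joint_distribution
    (p : ℤ → ℤ → ℤ → ℤ → ℝ)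
    (hpos : ∀ a1 ∈ ({-1, 1} : Finset ℤ), ∀ a2 ∈ ({-1, 1} : Finset ℤ),
      ∀ b1 ∈ ({-1, 1} : Finset ℤ), ∀ b2 ∈ ({-1, 1} : Finset ℤ), 0 ≤ p a1 a2 b1 b2)
    (hsum : ∑ a1 ∈ ({-1, 1} : Finset ℤ), ∑ a2 ∈ ({-1, 1} : Finset ℤ),
      ∑ b1 ∈ ({-1, 1} : Finset ℤ), ∑ b2 ∈ ({-1, 1} : Finset ℤ), p a1 a2 b1 b2 = 1)
    (E : ℤ → ℤ → ℝ)
    (hE : ∀ i ∈ ({1, 2} : Finset ℤ), ∀ j ∈ ({1, 2} : Finset ℤ),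
      E i j = ∑ a1 ∈ ({-1, 1} : Finset ℤ), ∑ a2 ∈ ({-1, 1} : Finset ℤ),
        ∑ b1 ∈ ({-1, 1} : Finset ℤ), ∑ b2 ∈ ({-1, 1} : Finset ℤ),
          ((if i = 1 then a1 else a2) * (if j = 1 then b1 else b2) : ℝ) * p a1 a2 b1 b2)
    (s11 s12 s21 s22 : ℝ)
    (hs11 : s11 = -1 ∨ s11 = 1) (hs12 : s12 = -1 ∨ s12 = 1)
    (hs21 : s21 = -1 ∨ s21 = 1) (hs22 : s22 = -1 ∨ s22 = 1)
    (hodd : s11 * s12 * s21 * s22 = -1) :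
    |s11 * E 1 1 + s12 * E 1 2 + s21 * E 2 1 + s22 * E 2 2| ≤ 2 := by
  have h11 := hE 1 (by decide) 1 (by decide)
  have h12 := hE 1 (by decide) 2 (by decide)
  have h21 := hE 2 (by decide) 1 (by decide)
  have h22 := hE 2 (by decide) 2 (by decide)
  simp only [Finset.sum_insert, Finset.mem_singleton, Finset.sum_singleton] at h11 h12 h21 h22 hsum
  norm_num at h11 h12 h21 h22 hsum
  have P : ∀ a1 ∈ ({-1, 1} : Finset ℤ), ∀ a2 ∈ ({-1, 1} : Finset ℤ),
      ∀ b1 ∈ ({-1, 1} : Finset ℤ), ∀ b2 ∈ ({-1, 1} : Finset ℤ), 0 ≤ p a1 a2 b1 b2 := hpos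
  have q1 := P (-1) (by decide) (-1) (by decide) (-1) (by decide) (-1) (by decide)
  have q2 := P (-1) (by decide) (-1) (by decide) (-1) (by decide) 1 (by decide)
  have q3 := P (-1) (by decide) (-1) (by decide) 1 (by decide) (-1) (by decide)
  have q4 := P (-1) (by decide) (-1) (by decide) 1 (by decide) 1 (by decide)
  have q5 := P (-1) (by decide) 1 (by decide) (-1) (by decide) (-1) (by decide)
  have q6 := P (-1) (by decide) 1 (by decide) (-1) (by decide) 1 (by decide)
  have q7 := P (-1) (by decide) 1 (by decide) 1 (by decide) (-1) (by decide)
  have q8 := P (-1) (by decide) 1 (by decide) 1 (by decide) 1 (by decide)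
  have q9 := P 1 (by decide) (-1) (by decide) (-1) (by decide) (-1) (by decide)
  have q10 := P 1 (by decide) (-1) (by decide) (-1) (by decide) 1 (by decide)
  have q11 := P 1 (by decide) (-1) (by decide) 1 (by decide) (-1) (by decide)
  have q12 := P 1 (by decide) (-1) (by decide) 1 (by decide) 1 (by decide)
  have q13 := P 1 (by decide) 1 (by decide) (-1) (by decide) (-1) (by decide)
  have q14 := P 1 (by decide) 1 (by decide) (-1) (by decide) 1 (by decide)
  have q15 := P 1 (by decide) 1 (by decide) 1 (by decide) (-1) (by decide)
  have q16 := P 1 (by decide) 1 (by decide) 1 (by decide) 1 (by decide)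
  rw [abs_le]
  rcases hs11 with rfl | rfl <;> rcases hs12 with rfl | rfl <;>
    rcases hs21 with rfl | rfl <;> rcases hs22 with rfl | rfl <;>
    norm_num at hodd <;> norm_num <;>
    constructor <;> linarith [q1, q2, q3, q4, q5, q6, q7, q8, q9, q10, q11, q12, q13, q14, q15, q16]
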